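/- Fix p ≥ 1 and n ≥ 1. Let a_1 ≥ a_2 ≥ ... ≥ a_n ≥ 0 and b_1, ..., b_n ≥ 0 be real numbers. Then Σ_{j=1}^n (a_j^p + b_j^p)^{1/p} ≥ Σ_{j=2}^n a_j + (a_1^p + Σ_{j=1}^n b_j^p)^{1/p}. -/

import Mathlib

open Real Finset

lemma aux_hasDeriv (r y : ℝ) (hy : 0 ≤ y) {t : ℝ} (ht : t ∈ Set.Ioi (0:ℝ)) :
    HasDerivAt (fun t => (t + y) ^ r - t ^ r)
      (r * (t + y) ^ (r - 1) - r * t ^ (r - 1)) t := by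
  have ht' : (0:ℝ) < t := ht
  have h1 : HasDerivAt (fun t : ℝ => (t + y) ^ r) (r * (t + y) ^ (r - 1) * 1) t := by
    exact (Real.hasDerivAt_rpow_const (Or.inl (by linarith))).comp t
      ((hasDerivAt_id t).add_const y)
  have h2 : HasDerivAt (fun t : ℝ => t ^ r) (r * t ^ (r - 1)) t :=
    Real.hasDerivAt_rpow_const (Or.inl ht'.ne')
  have h3 := h1.sub h2
  rw [mul_one] at h3
  exact h3

lemma aux_anti (r y : ℝ) (hr0 : 0 < r) (hr1 : r ≤ 1) (hy : 0 ≤ y) :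
    AntitoneOn (fun t => (t + y) ^ r - t ^ r) (Set.Ici (0:ℝ)) := by
  have hint : interior (Set.Ici (0:ℝ)) = Set.Ioi 0 := interior_Ici
  apply antitoneOn_of_deriv_nonpos (convex_Ici 0)
  · apply ContinuousOn.sub
    · exact ((Real.continuous_rpow_const hr0.le).comp (continuous_id.add continuous_const)).continuousOn
    · exact (Real.continuous_rpow_const hr0.le).continuousOn
  · rw [hint]
    intro t ht
    exact (aux_hasDeriv r y hy ht).differentiableAt.differentiableWithinAt
  · rw [hint]
    intro t ht
    rw [(aux_hasDeriv r y hy ht).deriv]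
    have ht' : (0:ℝ) < t := ht
    have : (t + y) ^ (r - 1) ≤ t ^ (r - 1) :=
      Real.rpow_le_rpow_of_nonpos ht' (by linarith) (by linarith)
    nlinarith

lemma aux_key (r : ℝ) (hr0 : 0 < r) (hr1 : r ≤ 1) {C D y : ℝ}
    (hD : 0 ≤ D) (hDC : D ≤ C) (hy : 0 ≤ y) :
    (C + y) ^ r - C ^ r ≤ (D + y) ^ r - D ^ r :=
  aux_anti r y hr0 hr1 hy (Set.mem_Ici.2 hD) (Set.mem_Ici.2 (hD.trans hDC)) hDC

lemma aux_nat (p : ℝ) (hp : 1 ≤ p) (a b : ℕ → ℝ) :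
    ∀ n : ℕ, (∀ j ≤ n, 0 ≤ a j) → (∀ i j, i ≤ j → j ≤ n → a j ≤ a i) →
      (∀ j ≤ n, 0 ≤ b j) →
    ∑ j ∈ Finset.range (n+1), (a j ^ p + b j ^ p) ^ (1/p) ≥
      (∑ j ∈ Finset.Ico 1 (n+1), a j) +
        (a 0 ^ p + ∑ j ∈ Finset.range (n+1), b j ^ p) ^ (1/p) := by
  have hp0 : (0:ℝ) < p := by linarith
  have hr0 : (0:ℝ) < 1/p := by positivity
  have hr1 : 1/p ≤ 1 := by
    rw [div_le_one hp0]; linarith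
  intro n
  induction n with
  | zero =>
    intro _ _ _
    simp
  | succ n ih =>
    intro hA hM hB
    have IH := ih (fun j hj => hA j (by omega)) (fun i j hij hj => hM i j hij (by omega))
      (fun j hj => hB j (by omega))
    rw [Finset.sum_range_succ, Finset.sum_range_succ (fun j => b j ^ p)]
    have key : (a 0 ^ p + ∑ j ∈ Finset.range (n+1), b j ^ p) ^ (1/p)
        + (a (n+1) ^ p + b (n+1) ^ p) ^ (1/p)
        ≥ a (n+1) + (a 0 ^ p + (∑ j ∈ Finset.range (n+1), b j ^ p) + b (n+1) ^ p) ^ (1/p) := by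
      set C := a 0 ^ p + ∑ j ∈ Finset.range (n+1), b j ^ p with hC
      set D := a (n+1) ^ p with hD
      have han : 0 ≤ a (n+1) := hA (n+1) le_rfl
      have hDnn : 0 ≤ D := Real.rpow_nonneg han p
      have hbn : 0 ≤ b (n+1) ^ p := Real.rpow_nonneg (hB (n+1) le_rfl) p
      have hsum : 0 ≤ ∑ j ∈ Finset.range (n+1), b j ^ p :=
        Finset.sum_nonneg fun j hj => Real.rpow_nonneg (hB j (by simp at hj; omega)) p
      have hDC : D ≤ C := by
        have h1 : a (n+1) ^ p ≤ a 0 ^ p :=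
          Real.rpow_le_rpow han (hM 0 (n+1) (by omega) le_rfl) hp0.le
        simp only [hC, hD]; linarith
      have hkey2 : (C + b (n+1) ^ p) ^ (1/p) - C ^ (1/p)
          ≤ (D + b (n+1) ^ p) ^ (1/p) - D ^ (1/p) :=
        aux_key (1/p) hr0 hr1 hDnn hDC hbn
      have hDr : D ^ (1/p) = a (n+1) := by
        rw [hD, ← Real.rpow_mul han, mul_one_div, div_self hp0.ne', Real.rpow_one]
      rw [hDr] at hkey2
      linarith
    rw [Finset.sum_Ico_succ_top (by omega : 1 ≤ n+1), ← add_assoc]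
    linarith

/-- Lemma 4.2 (ℓ_p-sum inequality): if `p ≥ 1`, `a 0 ≥ a 1 ≥ ⋯ ≥ a (n−1) ≥ 0` and
`b j ≥ 0`, then `∑ⱼ (aⱼᵖ + bⱼᵖ)^{1/p} ≥ ∑_{j ≥ 1} aⱼ + (a₀ᵖ + ∑ⱼ bⱼᵖ)^{1/p}`. -/
theorem lp_sum_inequality
    (p : ℝ) (hp : 1 ≤ p) (n : ℕ) (hn : 1 ≤ n)
    (a b : Fin n → ℝ)
    (ha_nonneg : ∀ j, 0 ≤ a j)
    (ha_mono : ∀ i j : Fin n, i ≤ j → a j ≤ a i)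
    (hb : ∀ j, 0 ≤ b j) :
    ∑ j, (a j ^ p + b j ^ p) ^ (1 / p) ≥
      (∑ j ∈ Finset.univ.erase (⟨0, by omega⟩ : Fin n), a j) +
        (a ⟨0, by omega⟩ ^ p + ∑ j, b j ^ p) ^ (1 / p) := by
  obtain ⟨m, rfl⟩ : ∃ m, n = m + 1 := ⟨n - 1, by omega⟩
  set A : ℕ → ℝ := fun j => if h : j < m + 1 then a ⟨j, h⟩ else 0 with hAdef
  set B : ℕ → ℝ := fun j => if h : j < m + 1 then b ⟨j, h⟩ else 0 with hBdef
  have hA : ∀ j ≤ m, 0 ≤ A j := by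
    intro j hj; simp only [hAdef, dif_pos (by omega : j < m + 1)]; exact ha_nonneg _
  have hM : ∀ i j, i ≤ j → j ≤ m → A j ≤ A i := by
    intro i j hij hj
    simp only [hAdef, dif_pos (show j < m + 1 by omega), dif_pos (show i < m + 1 by omega)]
    exact ha_mono ⟨i, by omega⟩ ⟨j, by omega⟩ (by simpa [Fin.le_def])
  have hB : ∀ j ≤ m, 0 ≤ B j := by
    intro j hj; simp only [hBdef, dif_pos (by omega : j < m + 1)]; exact hb _
  have key := aux_nat p hp A B m hA hM hB
  have e1 : ∑ j ∈ Finset.range (m+1), (A j ^ p + B j ^ p) ^ (1/p)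
      = ∑ j : Fin (m+1), (a j ^ p + b j ^ p) ^ (1/p) := by
    rw [← Fin.sum_univ_eq_sum_range (fun j => (A j ^ p + B j ^ p) ^ (1/p)) (m+1)]
    refine Finset.sum_congr rfl fun j _ => ?_
    simp [hAdef, hBdef, dif_pos j.isLt, Nat.le_of_lt_succ j.isLt]
  have e2 : ∑ j ∈ Finset.range (m+1), B j ^ p = ∑ j : Fin (m+1), b j ^ p := by
    rw [← Fin.sum_univ_eq_sum_range (fun j => B j ^ p) (m+1)]
    refine Finset.sum_congr rfl fun j _ => ?_
    simp [hBdef, dif_pos j.isLt, Nat.le_of_lt_succ j.isLt]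
  have e3 : A 0 = a ⟨0, by omega⟩ := by simp [hAdef]
  have e4 : ∑ j ∈ Finset.Ico 1 (m+1), A j
      = ∑ j ∈ Finset.univ.erase (⟨0, by omega⟩ : Fin (m+1)), a j := by
    have h1 : ∑ j ∈ Finset.range (m+1), A j = A 0 + ∑ j ∈ Finset.Ico 1 (m+1), A j :=
      Finset.sum_range_eq_add_Ico A (by omega)
    have h2 : ∑ j ∈ Finset.univ.erase (⟨0, by omega⟩ : Fin (m+1)), a j
        + a ⟨0, by omega⟩ = ∑ j : Fin (m+1), a j :=
      Finset.sum_erase_add _ _ (Finset.mem_univ _)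
    have h3 : ∑ j ∈ Finset.range (m+1), A j = ∑ j : Fin (m+1), a j := by
      rw [← Fin.sum_univ_eq_sum_range A (m+1)]
      refine Finset.sum_congr rfl fun j _ => ?_
      simp [hAdef, dif_pos j.isLt, Nat.le_of_lt_succ j.isLt]
    rw [e3] at h1
    linarith
  rw [e1, e2, e3, e4] at key
  exact key
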